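/- Let ζ ∈ ℂ be a primitive 9th root of unity. There do not exist natural numbers a, b, c such that 1 + ζ⁻³ = a/((1-ζ)(1-ζ²)) + b/((1-ζ⁴)(1-ζ⁸)) + c/((1-ζ⁵)(1-ζ⁷)). (This is the inconsistency of the holomorphic Lefschetz fixed point formula that shows the cube of an order 9 non-symplectic automorphism of a K3 surface cannot be symplectic.) -/

import Mathlib

open Polynomial

/-- The holomorphic Lefschetz fixed point formula for an order 9 automorphism `σ` of a K3
surface with `σ*(ω_X) = ζ³ ω_X` is inconsistent: there do not exist natural numbers
`a, b, c` (counting isolated fixed points of types `A_{1,2}`, `A_{4,8}`, `A_{5,7}`) with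
`1 + ζ⁻³ = a/((1-ζ)(1-ζ²)) + b/((1-ζ⁴)(1-ζ⁸)) + c/((1-ζ⁵)(1-ζ⁷))`. -/
theorem order_nine_cube_not_symplectic_lefschetz (ζ : ℂ) (hζ : IsPrimitiveRoot ζ 9) :
    ¬ ∃ a b c : ℕ,
      1 + (ζ ^ 3)⁻¹ =
        (a : ℂ) / ((1 - ζ) * (1 - ζ ^ 2)) +
        (b : ℂ) / ((1 - ζ ^ 4) * (1 - ζ ^ 8)) +
        (c : ℂ) / ((1 - ζ ^ 5) * (1 - ζ ^ 7)) := by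
  rintro ⟨a, b, c, h⟩
  have h9 : ζ ^ 9 = 1 := hζ.pow_eq_one
  have hne : ∀ k : ℕ, 0 < k → k < 9 → (1 : ℂ) - ζ ^ k ≠ 0 := fun k hk hk9 =>
    sub_ne_zero.mpr (Ne.symm (hζ.pow_ne_one_of_pos_of_lt hk.ne' hk9))
  have h1 := hne 1 (by norm_num) (by norm_num)
  have h2 := hne 2 (by norm_num) (by norm_num)
  have h4 := hne 4 (by norm_num) (by norm_num)
  have h5 := hne 5 (by norm_num) (by norm_num)
  have h7 := hne 7 (by norm_num) (by norm_num)
  have h8 := hne 8 (by norm_num) (by norm_num)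
  rw [pow_one] at h1
  have hinv : (ζ ^ 3)⁻¹ = ζ ^ 6 := inv_eq_of_mul_eq_one_left (by linear_combination h9)
  have hphi : ζ ^ 6 + ζ ^ 3 + 1 = 0 := by
    have h3 : ζ ^ 3 ≠ 1 := hζ.pow_ne_one_of_pos_of_lt (by norm_num) (by norm_num)
    have hz : (ζ ^ 3 - 1) * (ζ ^ 6 + ζ ^ 3 + 1) = 0 := by linear_combination h9
    rcases mul_eq_zero.mp hz with h' | h'
    · exact absurd (sub_eq_zero.mp h') h3
    · exact h'
  rw [hinv] at h
  have h'' : (1 + ζ ^ 6) * (((1 - ζ) * (1 - ζ ^ 2)) * ((1 - ζ ^ 4) * (1 - ζ ^ 8)) *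
        ((1 - ζ ^ 5) * (1 - ζ ^ 7)))
      = (a : ℂ) * (((1 - ζ ^ 4) * (1 - ζ ^ 8)) * ((1 - ζ ^ 5) * (1 - ζ ^ 7)))
      + (b : ℂ) * (((1 - ζ) * (1 - ζ ^ 2)) * ((1 - ζ ^ 5) * (1 - ζ ^ 7)))
      + (c : ℂ) * (((1 - ζ) * (1 - ζ ^ 2)) * ((1 - ζ ^ 4) * (1 - ζ ^ 8))) := by
    field_simp at h
    linear_combination h
  have key : (a : ℂ) * (ζ + 2 * ζ ^ 2 + 2 * ζ ^ 4 + ζ ^ 5)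
      + (b : ℂ) * (-2 * ζ - ζ ^ 2 - ζ ^ 4 - 2 * ζ ^ 5)
      + (c : ℂ) * (ζ - ζ ^ 2 - ζ ^ 4 + ζ ^ 5) + 3 * ζ ^ 3 = 0 := by
    linear_combination (-1 : ℂ) * h'' +
      ((1 - ζ - ζ ^ 2 + (3 : ℂ) * ζ ^ 3 + ζ ^ 5 - ζ ^ 6 - ζ ^ 7 + (-2 : ℂ) * ζ ^ 8 +
          (2 : ℂ) * ζ ^ 9 - ζ ^ 10 + (3 : ℂ) * ζ ^ 12 - ζ ^ 13 - ζ ^ 14 - ζ ^ 17 +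
          (2 : ℂ) * ζ ^ 18 + (-2 : ℂ) * ζ ^ 19 - ζ ^ 20 + (2 : ℂ) * ζ ^ 21 + ζ ^ 22 -
          ζ ^ 25 - ζ ^ 26 + ζ ^ 27)
        + (a : ℂ) * (-1 + ζ + (2 : ℂ) * ζ ^ 2 + ζ ^ 3 + (2 : ℂ) * ζ ^ 4 +
          (-2 : ℂ) * ζ ^ 7 - ζ ^ 8 + (-2 : ℂ) * ζ ^ 9 + ζ ^ 13 + ζ ^ 14 + ζ ^ 15 - ζ ^ 18)
        + (b : ℂ) * (-1 - ζ - ζ ^ 5 + ζ ^ 7 + ζ ^ 8 - ζ ^ 9)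
        + (c : ℂ) * (-1 + (2 : ℂ) * ζ + (-2 : ℂ) * ζ ^ 4 + ζ ^ 7 + ζ ^ 8 - ζ ^ 9)) * hphi
  -- package into a rational polynomial of degree ≤ 5 vanishing at ζ
  set Q : ℚ[X] := C ((a : ℚ) - 2 * b + c) * X + C (2 * (a : ℚ) - b - c) * X ^ 2 +
    C 3 * X ^ 3 + C (2 * (a : ℚ) - b - c) * X ^ 4 + C ((a : ℚ) - 2 * b + c) * X ^ 5 with hQdef
  have hQ : Polynomial.aeval ζ Q = 0 := by
    simp only [hQdef, map_add, map_mul, aeval_C, aeval_X, map_pow, map_ofNat, map_sub]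
    push_cast
    linear_combination key
  have hdvd : minpoly ℚ ζ ∣ Q := minpoly.dvd ℚ ζ hQ
  have hQne : Q ≠ 0 := by
    intro h0
    have hc : Q.coeff 3 = 3 := by
      rw [hQdef]
      simp only [Polynomial.coeff_add, Polynomial.coeff_C_mul, Polynomial.coeff_X_pow,
        Polynomial.coeff_X]
      norm_num
    rw [h0] at hc
    simp at hc
  have hdeg : Q.natDegree ≤ 5 := by
    rw [hQdef]
    compute_degree
  have hmin : minpoly ℚ ζ = Polynomial.cyclotomic 9 ℚ :=
    (Polynomial.cyclotomic_eq_minpoly_rat hζ (by norm_num)).symm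
  have hle : (minpoly ℚ ζ).natDegree ≤ 5 :=
    le_trans (Polynomial.natDegree_le_of_dvd hdvd hQne) hdeg
  rw [hmin, Polynomial.natDegree_cyclotomic, (by decide : Nat.totient 9 = 6)] at hle
  omega
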